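/- Let A, B ⊆ {1,…,d} be subsets with A nonempty and A ≠ B, such that E p q holds for all distinct p, q ∈ A and for all distinct p, q ∈ B. Let w = ∏_{i ∈ A} s_i and w' = ∏_{j ∈ B} s_j (products taken over the elements in increasing order). Then w does not belong to the normal closure of w' in W(E). -/

import Mathlib

/-- Relators of the right-angled Coxeter group of the graph `E`:
`s j ^ 2` for every vertex `j`, and `(s i * s j) ^ 2` for every edge `{i, j}` of `E`. -/
def racgRels {d : ℕ} (E : Fin d → Fin d → Prop) : Set (FreeGroup (Fin d)) :=
  {r | (∃ j : Fin d, r = FreeGroup.of j ^ 2) ∨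
    ∃ i j : Fin d, E i j ∧ r = (FreeGroup.of i * FreeGroup.of j) ^ 2}

/-- The right-angled Coxeter group `W(E)` of the graph `E`. -/
abbrev RACG {d : ℕ} (E : Fin d → Fin d → Prop) : Type := PresentedGroup (racgRels E)

/-- The standard generator `s j` of the right-angled Coxeter group `W(E)`. -/
def racgGen {d : ℕ} (E : Fin d → Fin d → Prop) (j : Fin d) : RACG E :=
  PresentedGroup.of j

lemma zmod2_add_self : ∀ a : ZMod 2, a + a = 0 := by decide

lemma list_prod_ofAdd {d : ℕ} (l : List (Fin d)) :
    (l.map (fun j => Multiplicative.ofAdd (Pi.single j (1 : ZMod 2)))).prod =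
      Multiplicative.ofAdd ((l.map (fun j => Pi.single j (1 : ZMod 2))).sum) := by
  induction l with
  | nil => simp
  | cons a t ih =>
    rw [List.map_cons, List.prod_cons, List.map_cons, List.sum_cons, ih, ← ofAdd_add]

/-- Lemma 4.3: if `A, B ⊆ {1,…,d}` are cliques of `E`, `A` is nonempty and `A ≠ B`,
then the product `w = ∏_{i ∈ A} s i` (in increasing order) does not belong to the normal
closure in `W(E)` of the product `w' = ∏_{j ∈ B} s j`. -/
theorem stmt_6 {d : ℕ} (hd : 1 ≤ d) (E : Fin d → Fin d → Prop)
    (hsymm : ∀ i j, E i j → E j i) (hirr : ∀ i, ¬ E i i)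
    (A B : Finset (Fin d)) (hA : A.Nonempty) (hAB : A ≠ B)
    (hAclique : ∀ p ∈ A, ∀ q ∈ A, p ≠ q → E p q)
    (hBclique : ∀ p ∈ B, ∀ q ∈ B, p ≠ q → E p q) :
    ((A.sort (· ≤ ·)).map (racgGen E)).prod ∉
      Subgroup.normalClosure {((B.sort (· ≤ ·)).map (racgGen E)).prod} := by
  classical
  set G := Multiplicative (Fin d → ZMod 2)
  set f : Fin d → G := fun j => Multiplicative.ofAdd (Pi.single j (1 : ZMod 2)) with hf
  have hadd : ∀ x : Fin d → ZMod 2, x + x = 0 := fun x =>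
    funext fun i => zmod2_add_self (x i)
  have hsq : ∀ g : G, g * g = 1 := fun g => by
    have : Multiplicative.toAdd g + Multiplicative.toAdd g = 0 := hadd _
    exact congrArg Multiplicative.ofAdd this
  have hrels : ∀ r ∈ racgRels E, FreeGroup.lift f r = 1 := by
    rintro r (⟨j, rfl⟩ | ⟨i, j, -, rfl⟩) <;> simp [pow_two, hsq]
  set φ : RACG E →* G := PresentedGroup.toGroup hrels with hφ
  -- the indicator function of a finset
  have key : ∀ S : Finset (Fin d),
      φ (((S.sort (· ≤ ·)).map (racgGen E)).prod) =
        Multiplicative.ofAdd (∑ i ∈ S, Pi.single i (1 : ZMod 2)) := by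
    intro S
    rw [map_list_prod, List.map_map]
    have h1 : φ ∘ racgGen E = f := by
      funext j
      exact PresentedGroup.toGroup.of hrels
    rw [h1, list_prod_ofAdd]
    congr 1
    have hperm : List.Perm ((S.sort (· ≤ ·)).map (fun j => Pi.single j (1 : ZMod 2)))
        (S.toList.map (fun j => Pi.single j (1 : ZMod 2))) :=
      (Finset.sort_perm_toList (s := S) (r := (· ≤ ·))).map _
    rw [Finset.sum_eq_multiset_sum]
    have : (Multiset.map (fun j => Pi.single j (1 : ZMod 2)) S.val).sum =
        ((S.sort (· ≤ ·)).map (fun j => Pi.single j (1 : ZMod 2))).sum := by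
      conv_lhs => rw [← Finset.sort_eq (s := S) (r := (· ≤ ·))]
      rw [Multiset.map_coe, Multiset.sum_coe]
    exact this.symm
  intro hmem
  have hnormal : Subgroup.normalClosure ({((B.sort (· ≤ ·)).map (racgGen E)).prod} :
      Set (RACG E)) ≤ (Subgroup.normalClosure
        ({φ (((B.sort (· ≤ ·)).map (racgGen E)).prod)} : Set G)).comap φ := by
    apply Subgroup.normalClosure_le_normal
    intro x hx
    rw [Set.mem_singleton_iff] at hx
    subst hx
    exact Subgroup.subset_normalClosure (Set.mem_singleton _)
  have h2 := hnormal hmem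
  rw [Subgroup.mem_comap] at h2
  have h3 : φ (((A.sort (· ≤ ·)).map (racgGen E)).prod) ∈
      Subgroup.closure ({φ (((B.sort (· ≤ ·)).map (racgGen E)).prod)} : Set G) := by
    refine Subgroup.normalClosure_le_normal Subgroup.subset_closure h2
  rw [Subgroup.mem_closure_singleton] at h3
  obtain ⟨n, hn⟩ := h3
  rw [key A, key B] at hn
  -- evaluate: indicator functions
  have hind : ∀ (S : Finset (Fin d)) (q : Fin d),
      (∑ i ∈ S, Pi.single i (1 : ZMod 2)) q = if q ∈ S then 1 else 0 := by
    intro S q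
    rw [Finset.sum_apply]
    simp [Pi.single_apply, Finset.sum_ite_eq S q]
  have hn' : (n : ZMod 2) • (∑ i ∈ B, Pi.single i (1 : ZMod 2)) =
      ∑ i ∈ A, Pi.single i (1 : ZMod 2) := by
    have h := congrArg Multiplicative.toAdd hn
    rw [toAdd_zpow, toAdd_ofAdd, toAdd_ofAdd] at h
    rwa [Int.cast_smul_eq_zsmul]
  have hcase : (n : ZMod 2) = 0 ∨ (n : ZMod 2) = 1 := by
    have : ∀ m : ZMod 2, m = 0 ∨ m = 1 := by decide
    exact this _
  obtain ⟨a, ha⟩ := hA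
  rcases hcase with h0 | h1
  · have := congrFun hn' a
    rw [h0] at this
    simp [hind, ha] at this
  · rw [h1, one_smul] at hn'
    apply hAB
    ext q
    have := congrFun hn' q
    rw [hind, hind] at this
    by_cases hqA : q ∈ A <;> by_cases hqB : q ∈ B <;> simp_all
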